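/- In the setting of the weighted directed cycle with T = (I−G)^{-1} and Δ = 1 − g_1⋯g_η ≠ 0, for each j = 1,...,η−1 the ratio T_{η,j} / T_{η,j+1} equals g_j (the weight of edge (j, j+1)), provided T_{η,j+1} ≠ 0. Hence all edge weights of the cycle are determined by the row of T indexed by the single node η. -/

import Mathlib

open Fin.CommRing Fin.NatCast

/-- In the weighted directed cycle setting, the edge weights are recovered from
the last row of `T = (I-G)⁻¹`: for `j ≠ η`, `T_{η,j} / T_{η,j+1} = g_j`
whenever `T_{η,j+1} ≠ 0`. -/
theorem stmt9 {n : ℕ} {F : Type*} [Field F]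
    (g : Fin (n + 1) → F) (hg : ∀ a, g a ≠ 0)
    (G : Matrix (Fin (n + 1)) (Fin (n + 1)) F)
    (hG : ∀ a b, G a b = if a = b + 1 then g b else 0)
    (hΔ : (1 : F) - ∏ a, g a ≠ 0)
    (j : Fin (n + 1)) (hj : j ≠ Fin.last n)
    (hT : (1 - G)⁻¹ (Fin.last n) (j + 1) ≠ 0) :
    (1 - G)⁻¹ (Fin.last n) j / (1 - G)⁻¹ (Fin.last n) (j + 1) = g j := by
  set Δ : F := 1 - ∏ a, g a with hΔdef
  set P : Fin (n+1) → Fin (n+1) → F :=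
    fun a c => ∏ k ∈ Finset.range ((a - c).val), g (c + (k : Fin (n+1))) with hP
  set B : Matrix (Fin (n+1)) (Fin (n+1)) F := Matrix.of fun a c => Δ⁻¹ * P a c with hBdef
  -- the "step" identity for path products
  have hstep : ∀ a c : Fin (n+1), a ≠ c → P a c = g (a - 1) * P (a - 1) c := by
    intro a c hac
    have h1 : a - c ≠ 0 := sub_ne_zero_of_ne hac
    have h1' : (a - c).val ≠ 0 := by
      intro h; apply h1; exact Fin.ext (by rw [h]; simp)
    have h2 : a - 1 - c = a - c - 1 := by ring
    have h3 : ((a - c - 1)).val + 1 = (a - c).val := by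
      rw [Fin.coe_sub_one, if_neg h1]; omega
    have h4 : c + (((a - c - 1).val : ℕ) : Fin (n+1)) = a - 1 := by
      rw [Fin.cast_val_eq_self]; ring
    simp only [hP]
    rw [← h3, Finset.prod_range_succ, h2, h4, mul_comm]
  -- full-cycle product
  have hfull : ∀ c : Fin (n+1), ∏ k ∈ Finset.range (n+1), g (c + (k : Fin (n+1))) = ∏ a, g a := by
    intro c
    rw [← Fin.prod_univ_eq_prod_range (fun k => g (c + (k : Fin (n+1)))) (n+1)]
    simp only [Fin.cast_val_eq_self]
    exact Equiv.prod_comp (Equiv.addLeft c) g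
  have hneg1 : ((-1 : Fin (n+1))).val = n := by
    have : (-1 : Fin (n+1)) = Fin.last n := by
      apply neg_eq_of_add_eq_zero_left
      simp [Fin.last_add_one]
    rw [this, Fin.val_last]
  have hcycle : ∀ c : Fin (n+1), g (c - 1) * P (c - 1) c = ∏ a, g a := by
    intro c
    have h5 : c - 1 - c = -1 := by ring
    have h6 : c + ((n : ℕ) : Fin (n+1)) = c - 1 := by
      have : ((n : ℕ) : Fin (n+1)) = -1 := by
        apply Fin.ext; rw [hneg1, Fin.val_cast_of_lt (by omega)]
      rw [this]; ring
    simp only [hP, h5, hneg1]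
    rw [← hfull c, mul_comm]
    rw [Finset.prod_range_succ, h6]
  -- the key entrywise identity
  have key : ∀ a c : Fin (n+1), P a c - g (a - 1) * P (a - 1) c = if a = c then Δ else 0 := by
    intro a c
    by_cases hac : a = c
    · subst hac
      have hPaa : P a a = 1 := by simp [hP]
      rw [hPaa, hcycle a, if_pos rfl]
    · rw [hstep a c hac, if_neg hac, sub_self]
  -- B is a right inverse of 1 - G
  have hB : (1 - G) * B = 1 := by
    ext a c
    rw [Matrix.mul_apply]
    have expand : ∀ b : Fin (n+1), ((1 : Matrix (Fin (n+1)) (Fin (n+1)) F) - G) a b * B b c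
        = (if b = a then B a c else 0) - (if b = a - 1 then g (a-1) * B (a-1) c else 0) := by
      intro b
      rw [Matrix.sub_apply, Matrix.one_apply, hG, sub_mul]
      congr 1
      · by_cases hba : b = a
        · subst hba; simp
        · rw [if_neg (Ne.symm hba), if_neg hba, zero_mul]
      · have hiff : a = b + 1 ↔ b = a - 1 := by
          constructor <;> intro h <;> [skip; skip] <;> subst h <;> ring
        by_cases hb : b = a - 1
        · rw [if_pos (hiff.mpr hb), if_pos hb, hb]
        · rw [if_neg (fun h => hb (hiff.mp h)), if_neg hb, zero_mul]
    rw [Finset.sum_congr rfl (fun b _ => expand b), Finset.sum_sub_distrib,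
      Finset.sum_ite_eq' _ a _, Finset.sum_ite_eq' _ (a-1) _]
    simp only [Finset.mem_univ, if_true, hBdef, Matrix.of_apply, Matrix.one_apply]
    have hring : Δ⁻¹ * P a c - g (a - 1) * (Δ⁻¹ * P (a - 1) c)
        = Δ⁻¹ * (P a c - g (a - 1) * P (a - 1) c) := by ring
    rw [hring, key a c]
    by_cases hac : a = c
    · rw [if_pos hac, if_pos hac, inv_mul_cancel₀ hΔ]
    · rw [if_neg hac, if_neg hac, mul_zero]
  have hinv : (1 - G)⁻¹ = B := Matrix.inv_eq_right_inv hB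
  rw [hinv] at hT ⊢
  -- now compute the ratio
  have hlj : Fin.last n - j ≠ 0 := sub_ne_zero_of_ne (Ne.symm hj)
  have hlj' : (Fin.last n - j).val ≠ 0 := by
    intro h; apply hlj; exact Fin.ext (by rw [h]; simp)
  have h2 : Fin.last n - (j + 1) = Fin.last n - j - 1 := by ring
  have h3 : (Fin.last n - j - 1).val + 1 = (Fin.last n - j).val := by
    rw [Fin.coe_sub_one, if_neg hlj]; omega
  have hmain : P (Fin.last n) j = g j * P (Fin.last n) (j + 1) := by
    simp only [hP, h2]
    rw [← h3, Finset.prod_range_succ']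
    have h0 : j + ((0 : ℕ) : Fin (n+1)) = j := by simp
    rw [h0, mul_comm]
    congr 1
    apply Finset.prod_congr rfl
    intro k _
    congr 1
    push_cast
    ring
  have hBeq : B (Fin.last n) j = g j * B (Fin.last n) (j + 1) := by
    simp only [hBdef, Matrix.of_apply, hmain]; ring
  rw [hBeq, mul_div_assoc, div_self hT, mul_one]
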